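/- Let $K \subseteq \mathbb{R}^d$ be a convex compact set with $0$ in its interior, let $y \in S^{d-1}$, let $I := \{t y : t y \in K\}$ be the corresponding diameter segment, and let $x' \in I$. Let $\Delta$ be the set of continuous convex functions on $K$, let $A(x', I)$ be the algebra of continuous functions on $K$ that are constant on some closed subinterval of $I$ with non-empty relative interior containing $x'$, and let $\Delta' := \{f \in \Delta : \min_{x \in I} f(x) = f(x')\}$. Then the uniform closure of $A(x', I) \cap \Delta$ equals $\Delta'$. -/

import Mathlib

open Set Filter

variable {E : Type*} [NormedAddCommGroup E] [NormedSpace ℝ E]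

/-- If `F` is convex on `K`, `b` lies on the segment `[a,c]`, `b ≠ c` and `F b = F c`,
then `F b ≤ F a`. -/
lemma key_slide {K : Set E} {F : E → ℝ} (hF : ConvexOn ℝ K F) {a b c : E}
    (ha : a ∈ K) (hc : c ∈ K) (hb : b ∈ segment ℝ a c) (hbc : b ≠ c)
    (hFbc : F b = F c) : F b ≤ F a := by
  obtain ⟨u, v, hu, hv, huv, rfl⟩ := hb
  have h := hF.2 ha hc hu hv huv
  simp only [smul_eq_mul] at h
  rcases hu.lt_or_eq with hu0 | hu0
  · rw [hFbc] at h ⊢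
    have h3 : u * F c = F c - v * F c := by
      rw [show u = 1 - v by linarith]; ring
    have h2 : u * F c ≤ u * F a := by linarith
    exact le_of_mul_le_mul_left h2 hu0
  · exfalso; apply hbc
    have hv1 : v = 1 := by linarith
    rw [← hu0, hv1, zero_smul, one_smul, zero_add]

lemma smul_mem_segment' {y : E} {α β γ : ℝ} (h1 : α ≤ γ) (h2 : γ ≤ β) :
    γ • y ∈ segment ℝ (α • y) (β • y) := by
  have hγ : γ ∈ segment ℝ α β := by
    rw [segment_eq_Icc (h1.trans h2)]; exact ⟨h1, h2⟩
  obtain ⟨u, v, hu, hv, huv, h⟩ := hγ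
  exact ⟨u, v, hu, hv, huv, by
    rw [← h]; simp [add_smul, smul_smul, smul_eq_mul]⟩

lemma smul_y_inj {y : E} (hy : ‖y‖ = 1) {α β : ℝ} (h : α • y = β • y) : α = β := by
  have hy0 : y ≠ 0 := by intro h0; rw [h0] at hy; simp at hy
  exact smul_left_injective ℝ hy0 h

/-- A convex function on `K` that is constant on the coordinate interval `[tp,tq]` of the
line `ℝ•y`, with `t' ∈ [tp,tq]`, attains at `t'•y` a value `≤` its value at any point `t•y ∈ K`. -/
lemma min_on_line {K : Set E} {F : E → ℝ} (hF : ConvexOn ℝ K F) {y : E} (hy : ‖y‖ = 1)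
    {tp tq t' t : ℝ} (hpq : tp < tq)
    (hKseg : ∀ s : ℝ, tp ≤ s → s ≤ tq → s • y ∈ K)
    (hconst : ∀ s : ℝ, tp ≤ s → s ≤ tq → F (s • y) = F (t' • y))
    (ht'1 : tp ≤ t') (ht'2 : t' ≤ tq) (hxK : t • y ∈ K) :
    F (t' • y) ≤ F (t • y) := by
  by_cases h1 : t < tp
  · by_cases h2 : t' < tq
    · have hm1 : tp ≤ (t' + tq) / 2 := by linarith
      have hm2 : (t' + tq) / 2 ≤ tq := by linarith
      have hb : t' • y ∈ segment ℝ (t • y) (((t' + tq) / 2) • y) :=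
        smul_mem_segment' (by linarith) (by linarith)
      have hbc : t' • y ≠ ((t' + tq) / 2) • y := fun he => by
        have := smul_y_inj hy he; linarith
      exact key_slide hF hxK (hKseg _ hm1 hm2) hb hbc (hconst _ hm1 hm2).symm
    · push_neg at h2
      have ht'q : t' = tq := le_antisymm ht'2 h2
      have hb : tp • y ∈ segment ℝ (t • y) (t' • y) :=
        smul_mem_segment' h1.le (by linarith)
      have hbc : tp • y ≠ t' • y := fun he => by
        have := smul_y_inj hy he; linarith
      have hFbc : F (tp • y) = F (t' • y) := hconst tp le_rfl hpq.le
      have := key_slide hF hxK (hKseg t' ht'1 ht'2) hb hbc hFbc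
      rw [← hFbc]; exact this
  · push_neg at h1
    by_cases h3 : t ≤ tq
    · exact (hconst t h1 h3).ge
    · push_neg at h3
      by_cases h2 : tp < t'
      · have hm1 : tp ≤ (tp + t') / 2 := by linarith
        have hm2 : (tp + t') / 2 ≤ tq := by linarith
        have hb : t' • y ∈ segment ℝ (t • y) (((tp + t') / 2) • y) := by
          rw [segment_symm]
          exact smul_mem_segment' (by linarith) (by linarith)
        have hbc : t' • y ≠ ((tp + t') / 2) • y := fun he => by
          have := smul_y_inj hy he; linarith
        exact key_slide hF hxK (hKseg _ hm1 hm2) hb hbc (hconst _ hm1 hm2).symm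
      · push_neg at h2
        have ht'p : t' = tp := le_antisymm h2 ht'1
        have hb : tq • y ∈ segment ℝ (t • y) (t' • y) := by
          rw [segment_symm]
          exact smul_mem_segment' (by linarith) h3.le
        have hbc : tq • y ≠ t' • y := fun he => by
          have := smul_y_inj hy he; linarith
        have hFbc : F (tq • y) = F (t' • y) := hconst tq hpq.le le_rfl
        have := key_slide hF hxK (hKseg t' ht'1 ht'2) hb hbc hFbc
        rw [← hFbc]; exact this

lemma fwd_key_le {K : Set E} {F : E → ℝ} (hF : ConvexOn ℝ K F) {y : E} (hy : ‖y‖ = 1)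
    {p q x' x : E} {tp tq t' t : ℝ} (hp : p = tp • y) (hq : q = tq • y)
    (hx'e : x' = t' • y) (hxe : x = t • y)
    (hpq : p ≠ q) (hsegK : segment ℝ p q ⊆ K) (hx'seg : x' ∈ segment ℝ p q)
    (hconst : ∀ z ∈ segment ℝ p q, F z = F x') (hxK : x ∈ K) (hle : tp ≤ tq) :
    F x' ≤ F x := by
  subst hp hq hx'e hxe
  have htpq : tp < tq := hle.lt_of_ne (fun he => hpq (by rw [he]))
  obtain ⟨u, v, hu, hv, huv, heq⟩ := hx'seg
  have ht'uv : u * tp + v * tq = t' := by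
    apply smul_y_inj hy
    rw [← heq]; simp [add_smul, smul_smul, smul_eq_mul]
  have e1 : t' - tp = v * (tq - tp) := by linear_combination tp * huv - ht'uv
  have e2 : tq - t' = u * (tq - tp) := by linear_combination ht'uv - tq * huv
  have ht'1 : tp ≤ t' := by nlinarith [mul_nonneg hv (sub_nonneg.2 hle)]
  have ht'2 : t' ≤ tq := by nlinarith [mul_nonneg hu (sub_nonneg.2 hle)]
  have hconst' : ∀ s : ℝ, tp ≤ s → s ≤ tq → F (s • y) = F (t' • y) := fun s h1 h2 =>
    hconst _ (smul_mem_segment' h1 h2)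
  exact min_on_line hF hy htpq (fun s h1 h2 => hsegK (smul_mem_segment' h1 h2))
    hconst' ht'1 ht'2 hxK

lemma fwd_key {K : Set E} {F : E → ℝ} (hF : ConvexOn ℝ K F) {y : E} (hy : ‖y‖ = 1)
    {p q x' x : E} {tp tq t' t : ℝ} (hp : p = tp • y) (hq : q = tq • y)
    (hx'e : x' = t' • y) (hxe : x = t • y)
    (hpq : p ≠ q) (hsegK : segment ℝ p q ⊆ K) (hx'seg : x' ∈ segment ℝ p q)
    (hconst : ∀ z ∈ segment ℝ p q, F z = F x') (hxK : x ∈ K) :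
    F x' ≤ F x := by
  rcases le_total tp tq with h | h
  · exact fwd_key_le hF hy hp hq hx'e hxe hpq hsegK hx'seg hconst hxK h
  · refine fwd_key_le hF hy hq hp hx'e hxe hpq.symm ?_ ?_ ?_ hxK h
    · rwa [segment_symm]
    · rwa [segment_symm]
    · intro z hz; exact hconst z (by rwa [segment_symm])

open RealInnerProductSpace

set_option maxHeartbeats 1000000 in
theorem stmt16 {d : ℕ} (K : Set (EuclideanSpace ℝ (Fin d)))
    (hKc : Convex ℝ K) (hK : IsCompact K)
    (h0 : (0 : EuclideanSpace ℝ (Fin d)) ∈ interior K)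
    (y : EuclideanSpace ℝ (Fin d)) (hy : ‖y‖ = 1)
    (I : Set (EuclideanSpace ℝ (Fin d)))
    (hI : I = {x | ∃ t : ℝ, x = t • y ∧ x ∈ K})
    (x' : EuclideanSpace ℝ (Fin d)) (hx' : x' ∈ I) :
    {f : EuclideanSpace ℝ (Fin d) → ℝ |
      ∃ F : ℕ → EuclideanSpace ℝ (Fin d) → ℝ,
        (∀ n, (ContinuousOn (F n) K ∧
            ∃ p q, p ≠ q ∧ segment ℝ p q ⊆ I ∧ x' ∈ segment ℝ p q ∧
              ∀ x ∈ segment ℝ p q, F n x = F n x') ∧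
          ContinuousOn (F n) K ∧ ConvexOn ℝ K (F n)) ∧
        TendstoUniformlyOn F f Filter.atTop K} =
    {f : EuclideanSpace ℝ (Fin d) → ℝ |
      (ContinuousOn f K ∧ ConvexOn ℝ K f) ∧ ∀ x ∈ I, f x' ≤ f x} := by
  have hIK : I ⊆ K := by
    rw [hI]; rintro x ⟨t, ht, hxK⟩; exact hxK
  have hx'K : x' ∈ K := hIK hx'
  obtain ⟨t', hx'e, -⟩ : ∃ t : ℝ, x' = t • y ∧ x' ∈ K := by rw [hI] at hx'; exact hx'
  have h0K : (0 : EuclideanSpace ℝ (Fin d)) ∈ K := interior_subset h0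
  ext f
  simp only [Set.mem_setOf_eq]
  constructor
  · rintro ⟨F, hFn, hFu⟩
    have hcont : ContinuousOn f K :=
      hFu.continuousOn (Filter.Eventually.of_forall fun n => (hFn n).2.1).frequently
    have hconv : ConvexOn ℝ K f := by
      refine ⟨hKc, fun x hx z hz a b ha hb hab => ?_⟩
      have hm : a • x + b • z ∈ K := hKc hx hz ha hb hab
      have l1 := hFu.tendsto_at hm
      have l2 : Filter.Tendsto (fun n => a • F n x + b • F n z) Filter.atTop
          (nhds (a • f x + b • f z)) := by
        simp only [smul_eq_mul]
        exact ((hFu.tendsto_at hx).const_mul a).add ((hFu.tendsto_at hz).const_mul b)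
      exact le_of_tendsto_of_tendsto' l1 l2 fun n => (hFn n).2.2.2 hx hz ha hb hab
    refine ⟨⟨hcont, hconv⟩, fun x hx => ?_⟩
    have hxK : x ∈ K := hIK hx
    obtain ⟨t, hxe, -⟩ : ∃ t : ℝ, x = t • y ∧ x ∈ K := by rw [hI] at hx; exact hx
    have key : ∀ n, F n x' ≤ F n x := by
      intro n
      obtain ⟨p, q, hpq, hsegI, hx'seg, hconst⟩ := (hFn n).1.2
      have hpI : p ∈ I := hsegI (left_mem_segment ℝ p q)
      have hqI : q ∈ I := hsegI (right_mem_segment ℝ p q)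
      obtain ⟨tp, hpe, -⟩ : ∃ t : ℝ, p = t • y ∧ p ∈ K := by rw [hI] at hpI; exact hpI
      obtain ⟨tq, hqe, -⟩ : ∃ t : ℝ, q = t • y ∧ q ∈ K := by rw [hI] at hqI; exact hqI
      exact fwd_key (hFn n).2.2 hy hpe hqe hx'e hxe hpq
        (fun z hz => hIK (hsegI hz)) hx'seg hconst hxK
    exact le_of_tendsto_of_tendsto' (hFu.tendsto_at hx'K) (hFu.tendsto_at hxK) key
  · rintro ⟨⟨hfc, hfconv⟩, hmin⟩
    have hIconv : Convex ℝ I := by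
      rw [hI]
      rintro u ⟨tu, hue, huK⟩ v ⟨tv, hve, hvK⟩ a b ha hb hab
      refine ⟨a * tu + b * tv, ?_, hKc huK hvK ha hb hab⟩
      rw [hue, hve]; simp [add_smul, smul_smul]
    obtain ⟨zM, hzMK, hzM⟩ := hK.exists_isMaxOn ⟨0, h0K⟩ hfc
    obtain ⟨zm, hzmK, hzm⟩ := hK.exists_isMinOn ⟨0, h0K⟩ hfc
    set M := f zM with hM
    obtain ⟨g, hg⟩ := ContinuousMap.exists_restrict_eq hK.isClosed
      (⟨K.restrict f, hfc.restrict⟩ : C(K, ℝ))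
    have hgf : ∀ z ∈ K, g z = f z := by
      intro z hz
      have := ContinuousMap.congr_fun hg ⟨z, hz⟩
      exact this
    have claim : ∀ δ : ℝ, 0 < δ → ∃ G : EuclideanSpace ℝ (Fin d) → ℝ,
        (ContinuousOn G K ∧
          (∃ p q, p ≠ q ∧ segment ℝ p q ⊆ I ∧ x' ∈ segment ℝ p q ∧
            ∀ x ∈ segment ℝ p q, G x = G x') ∧ ConvexOn ℝ K G) ∧
        ∀ z ∈ K, f z ≤ G z ∧ G z ≤ f z + δ := by
      intro δ hδ
      set D : Set (EuclideanSpace ℝ (Fin d) × ℝ) :=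
        {z | z.1 ∈ K ∧ f z.1 ≤ z.2 ∧ z.2 ≤ M} with hD
      have hDconv : Convex ℝ D := by
        rintro ⟨z1, z2⟩ ⟨hz1, hz2, hz3⟩ ⟨w1, w2⟩ ⟨hw1, hw2, hw3⟩ a b ha hb hab
        have hcvx := hfconv.2 hz1 hw1 ha hb hab
        simp only [smul_eq_mul] at hcvx
        refine ⟨hKc hz1 hw1 ha hb hab, ?_, ?_⟩
        · simp only [Prod.smul_mk, Prod.mk_add_mk, smul_eq_mul]
          have h1 : a * f z1 ≤ a * z2 := mul_le_mul_of_nonneg_left hz2 ha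
          have h2 : b * f w1 ≤ b * w2 := mul_le_mul_of_nonneg_left hw2 hb
          calc f (a • z1 + b • w1) ≤ a * f z1 + b * f w1 := hcvx
            _ ≤ a * z2 + b * w2 := add_le_add h1 h2
        · simp only [Prod.smul_mk, Prod.mk_add_mk, smul_eq_mul]
          calc a * z2 + b * w2 ≤ a * M + b * M :=
                add_le_add (mul_le_mul_of_nonneg_left hz3 ha)
                  (mul_le_mul_of_nonneg_left hw3 hb)
            _ = M := by rw [← add_mul, hab, one_mul]
      have hDeq : D = ({z : EuclideanSpace ℝ (Fin d) × ℝ | z.1 ∈ K} ∩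
          {z | g z.1 ≤ z.2}) ∩ {z | z.2 ≤ M} := by
        ext ⟨z1, z2⟩
        simp only [hD, Set.mem_setOf_eq, Set.mem_inter_iff]
        constructor
        · rintro ⟨h1, h2, h3⟩; exact ⟨⟨h1, by rw [hgf z1 h1]; exact h2⟩, h3⟩
        · rintro ⟨⟨h1, h2⟩, h3⟩; exact ⟨h1, by rw [← hgf z1 h1]; exact h2, h3⟩
      have hDclosed : IsClosed D := by
        rw [hDeq]
        exact ((hK.isClosed.preimage continuous_fst).inter
          (isClosed_le (g.continuous.comp continuous_fst) continuous_snd)).inter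
          (isClosed_le continuous_snd continuous_const)
      have hDcompact : IsCompact D := by
        refine (hK.prod (isCompact_Icc (a := f zm) (b := M))).of_isClosed_subset hDclosed ?_
        rintro ⟨z1, z2⟩ ⟨h1, h2, h3⟩
        exact ⟨h1, ⟨le_trans ((isMinOn_iff.mp hzm) z1 h1) h2, h3⟩⟩
      set Lmap : (EuclideanSpace ℝ (Fin d) × ℝ) →ₗ[ℝ] (EuclideanSpace ℝ (Fin d) × ℝ) :=
        { toFun := fun z => (z.1 - ⟪y, z.1⟫ • y, z.2)
          map_add' := fun z w => by
            have : ⟪y, z.1 + w.1⟫ = ⟪y, z.1⟫ + ⟪y, w.1⟫ := inner_add_right _ _ _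
            simp only [Prod.fst_add, Prod.snd_add, this, add_smul, Prod.mk_add_mk,
              Prod.mk.injEq]
            exact ⟨by abel, trivial⟩
          map_smul' := fun c z => by
            have : ⟪y, c • z.1⟫ = c * ⟪y, z.1⟫ := real_inner_smul_right _ _ _
            simp only [Prod.smul_fst, Prod.smul_snd, this, RingHom.id_apply, Prod.smul_mk,
              smul_sub, mul_smul] } with hLmap
      have hLcont : Continuous Lmap := Lmap.continuous_of_finiteDimensional
      set S := Lmap '' D with hS
      have hSconv : Convex ℝ S := hDconv.linear_image Lmap
      have hScl : IsClosed S := (hDcompact.image hLcont).isClosed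
      have hyy : ⟪y, y⟫ = 1 := by
        rw [real_inner_self_eq_norm_sq, hy]; norm_num
      have hline : ∀ (c : ℝ) (r : ℝ), Lmap (c • y, r) = (0, r) := by
        intro c r
        have : ⟪y, c • y⟫ = c := by rw [real_inner_smul_right, hyy, mul_one]
        simp only [hLmap, LinearMap.coe_mk, AddHom.coe_mk, this, sub_self]
      have hnot : ((0 : EuclideanSpace ℝ (Fin d)), f x' - δ / 2) ∉ S := by
        rintro ⟨⟨z1, z2⟩, ⟨hz1, hz2, hz3⟩, heq⟩
        simp only [hLmap, LinearMap.coe_mk, AddHom.coe_mk, Prod.mk.injEq] at heq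
        obtain ⟨he1, he2⟩ := heq
        have h1 : z1 = ⟪y, z1⟫ • y := by
          rwa [sub_eq_zero] at he1
        have hz1I : z1 ∈ I := by rw [hI]; exact ⟨⟪y, z1⟫, h1, hz1⟩
        have := hmin z1 hz1I
        linarith [hz2, he2 ▸ hz2]
      obtain ⟨ℓ, s, hs1, hs2⟩ := geometric_hahn_banach_point_closed hSconv hScl hnot
      set β := ℓ (0, 1) with hβdef
      have hl00 : ℓ ((0 : EuclideanSpace ℝ (Fin d)), (0 : ℝ)) = 0 := by
        have h : ((0 : EuclideanSpace ℝ (Fin d)), (0 : ℝ)) =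
            (0 : EuclideanSpace ℝ (Fin d) × ℝ) := rfl
        rw [h, map_zero]
      have hdecomp : ∀ (z : EuclideanSpace ℝ (Fin d)) (r : ℝ),
          ℓ (z, r) = ℓ (z, 0) + r * β := by
        intro z r
        have h : (z, r) = (z, (0 : ℝ)) + r • ((0 : EuclideanSpace ℝ (Fin d)), (1 : ℝ)) := by
          simp [Prod.ext_iff]
        rw [h, map_add, map_smul, smul_eq_mul]
      have hx'S : s < ℓ ((0 : EuclideanSpace ℝ (Fin d)), 0) + f x' * β := by
        have hmem : ((0 : EuclideanSpace ℝ (Fin d)), f x') ∈ S := by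
          refine ⟨(x', f x'), ⟨hx'K, le_rfl, (isMaxOn_iff.mp hzM) x' hx'K⟩, ?_⟩
          have h := hline t' (f x')
          rw [← hx'e] at h
          exact h
        have h := hs2 _ hmem
        rwa [hdecomp] at h
      have hp0 : ℓ ((0 : EuclideanSpace ℝ (Fin d)), 0) + (f x' - δ / 2) * β < s := by
        have h := hs1
        rwa [hdecomp] at h
      have hβ : 0 < β := by
        rw [hl00] at hx'S hp0
        nlinarith
      obtain ⟨LF, hLFz⟩ : ∃ LF : EuclideanSpace ℝ (Fin d) →ₗ[ℝ] ℝ,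
          ∀ z, LF z = ℓ (Lmap (z, 0)) :=
        ⟨ℓ.toLinearMap.comp (Lmap.comp (LinearMap.inl ℝ (EuclideanSpace ℝ (Fin d)) ℝ)),
          fun z => rfl⟩
      have hL01 : Lmap ((0 : EuclideanSpace ℝ (Fin d)), (1 : ℝ)) =
          ((0 : EuclideanSpace ℝ (Fin d)), (1 : ℝ)) := by
        have := hline 0 1; rwa [zero_smul] at this
      have hsplit : ∀ (z : EuclideanSpace ℝ (Fin d)) (r : ℝ),
          ℓ (Lmap (z, r)) = LF z + r * β := by
        intro z r
        have h : (z, r) = (z, (0 : ℝ)) + r • ((0 : EuclideanSpace ℝ (Fin d)), (1 : ℝ)) := by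
          simp [Prod.ext_iff]
        rw [h, map_add, map_smul, map_add, map_smul, hL01, hLFz, smul_eq_mul, hβdef]
      set aF : EuclideanSpace ℝ (Fin d) → ℝ := fun z => (s - LF z) / β with haFdef
      have haK : ∀ z ∈ K, aF z < f z := by
        intro z hz
        have hmem : Lmap (z, f z) ∈ S := ⟨(z, f z), ⟨hz, le_rfl, (isMaxOn_iff.mp hzM) z hz⟩, rfl⟩
        have h2 := hs2 _ hmem
        rw [hsplit] at h2
        rw [haFdef, div_lt_iff₀ hβ]
        nlinarith
      have haconst : ∀ r : ℝ, aF (r • y) = s / β := by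
        intro r
        have h : LF (r • y) = 0 := by rw [hLFz, hline r 0, hl00]
        simp [haFdef, h]
      have hax' : f x' - δ / 2 < s / β := by
        rw [lt_div_iff₀ hβ]
        rw [hl00] at hp0
        linarith
      have haconv : ConvexOn ℝ K aF := by
        refine ⟨hKc, fun z hz w hw c e hc he hce => ?_⟩
        apply le_of_eq
        have hLF2 : LF (c • z + e • w) = c * LF z + e * LF w := by
          rw [map_add, map_smul, map_smul, smul_eq_mul, smul_eq_mul]
        simp only [haFdef, hLF2, smul_eq_mul]
        have hβ' : β ≠ 0 := hβ.ne'
        field_simp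
        linear_combination (-s) * hce
      have hacont : Continuous aF :=
        (continuous_const.sub LF.continuous_of_finiteDimensional).div_const β
      set G : EuclideanSpace ℝ (Fin d) → ℝ := fun z => max (f z) (aF z + δ) with hGdef
      have hGcont : ContinuousOn G K := by
        have h2 : ContinuousOn (fun z => aF z + δ) K :=
          (hacont.add continuous_const).continuousOn
        exact ContinuousOn.sup hfc h2 |>.congr fun z hz => by
          simp [hGdef]
      have hGconv : ConvexOn ℝ K G := by
        have h2 : ConvexOn ℝ K (fun z => aF z + δ) := haconv.add (convexOn_const δ hKc)
        have h3 := hfconv.sup h2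
        have heq : G = f ⊔ (fun z => aF z + δ) := by
          funext z; rw [Pi.sup_apply]
        rw [heq]; exact h3
      have hGbounds : ∀ z ∈ K, f z ≤ G z ∧ G z ≤ f z + δ := fun z hz =>
        ⟨le_max_left _ _, max_le (by linarith) (by linarith [haK z hz])⟩
      obtain ⟨r₁, hr₁, hcont'⟩ : ∃ r > 0, ∀ z ∈ K, dist z x' < r → f z < f x' + δ / 2 := by
        have hcw := hfc x' hx'K
        rw [Metric.continuousWithinAt_iff] at hcw
        obtain ⟨r, hr, h⟩ := hcw (δ / 2) (by positivity)
        refine ⟨r, hr, fun z hz hdz => ?_⟩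
        have h2 := h hz hdz
        rw [Real.dist_eq] at h2
        have := abs_lt.mp h2
        linarith [this.2]
      obtain ⟨r₀, hr₀, hball⟩ : ∃ r > 0, Metric.ball (0 : EuclideanSpace ℝ (Fin d)) r ⊆ K := by
        rw [mem_interior_iff_mem_nhds, Metric.mem_nhds_iff] at h0
        exact h0
      obtain ⟨q', hq'I, hq'ne, hq'dist⟩ : ∃ q', q' ∈ I ∧ q' ≠ x' ∧ dist q' x' < r₁ := by
        by_cases hx0 : x' = 0
        · set c := min r₀ r₁ / 2 with hc
          have hc0 : 0 < c := by positivity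
          have hcr₀ : c < r₀ := by
            have := min_le_left r₀ r₁; simp only [hc]; linarith
          have hcr₁ : c < r₁ := by
            have := min_le_right r₀ r₁; simp only [hc]; linarith
          have hyne : y ≠ 0 := fun h => by rw [h] at hy; simp at hy
          refine ⟨c • y, ?_, ?_, ?_⟩
          · rw [hI]
            refine ⟨c, rfl, hball ?_⟩
            rw [Metric.mem_ball, dist_zero_right, norm_smul, hy, mul_one,
              Real.norm_eq_abs]
            rwa [abs_of_pos hc0]
          · rw [hx0]
            exact smul_ne_zero hc0.ne' hyne
          · rw [hx0, dist_zero_right, norm_smul, hy, mul_one, Real.norm_eq_abs,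
              abs_of_pos hc0]
            exact hcr₁
        · have hx'norm : 0 < ‖x'‖ := norm_pos_iff.mpr hx0
          set c := min 1 (r₁ / ‖x'‖) / 2 with hc
          have hc0 : 0 < c := by positivity
          have hc1 : c < 1 := by
            have := min_le_left 1 (r₁ / ‖x'‖); simp only [hc]; linarith
          have hcr : c < r₁ / ‖x'‖ := by
            have := min_le_right 1 (r₁ / ‖x'‖); simp only [hc]; linarith
          refine ⟨(1 - c) • x', ?_, ?_, ?_⟩
          · rw [hI]
            refine ⟨(1 - c) * t', by rw [hx'e, smul_smul], ?_⟩
            have hmem := hKc h0K hx'K hc0.le (by linarith : (0:ℝ) ≤ 1 - c)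
              (by ring : c + (1 - c) = 1)
            simpa using hmem
          · intro h
            have h2 : (1 - c) • x' = (1 : ℝ) • x' := by rw [h, one_smul]
            have := smul_left_injective ℝ hx0 h2
            linarith [this]
          · rw [dist_eq_norm]
            have h3 : (1 - c) • x' - x' = (-c) • x' := by module
            rw [h3, norm_smul, Real.norm_eq_abs, abs_neg, abs_of_pos hc0]
            exact (lt_div_iff₀ hx'norm).mp hcr
      have hsegI : segment ℝ x' q' ⊆ I := hIconv.segment_subset hx' hq'I
      have hsegdist : ∀ z ∈ segment ℝ x' q', dist z x' ≤ dist q' x' := by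
        rintro z ⟨u, v, hu, hv, huv, rfl⟩
        rw [dist_eq_norm, dist_eq_norm]
        have hu1 : u = 1 - v := by linarith
        subst hu1
        have h1 : (1 - v) • x' + v • q' - x' = v • (q' - x') := by module
        rw [h1, norm_smul, Real.norm_eq_abs, abs_of_nonneg hv]
        have hv1 : v ≤ 1 := by linarith
        calc v * ‖q' - x'‖ ≤ 1 * ‖q' - x'‖ :=
              mul_le_mul_of_nonneg_right hv1 (norm_nonneg _)
          _ = ‖q' - x'‖ := one_mul _
      have hfseg : ∀ z ∈ segment ℝ x' q', f z < f x' + δ / 2 := fun z hz =>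
        hcont' z (hIK (hsegI hz)) (lt_of_le_of_lt (hsegdist z hz) hq'dist)
      have hval : ∀ z ∈ segment ℝ x' q', G z = s / β + δ := by
        intro z hz
        have hzI : z ∈ I := hsegI hz
        obtain ⟨tz, hze, -⟩ : ∃ t : ℝ, z = t • y ∧ z ∈ K := by rw [hI] at hzI; exact hzI
        have haz : aF z = s / β := by rw [hze]; exact haconst tz
        have hlt : f z < aF z + δ := by
          rw [haz]
          have := hfseg z hz
          linarith
        rw [hGdef]
        simp only
        rw [max_eq_right hlt.le, haz]
      have hGconst : ∀ z ∈ segment ℝ x' q', G z = G x' := by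
        intro z hz
        rw [hval z hz, hval x' (left_mem_segment ℝ x' q')]
      exact ⟨G, ⟨hGcont, ⟨x', q', Ne.symm hq'ne, hsegI, left_mem_segment ℝ x' q', hGconst⟩,
        hGconv⟩, hGbounds⟩
    choose G hG1 hG2 using fun n : ℕ => claim (1 / (n + 1)) (by positivity)
    refine ⟨G, fun n => ⟨⟨(hG1 n).1, (hG1 n).2.1⟩, (hG1 n).1, (hG1 n).2.2⟩, ?_⟩
    rw [Metric.tendstoUniformlyOn_iff]
    intro ε hε
    obtain ⟨N, hN⟩ := exists_nat_one_div_lt hε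
    filter_upwards [Filter.eventually_ge_atTop N] with n hn x hx
    have h1 := (hG2 n x hx).1
    have h2 := (hG2 n x hx).2
    rw [Real.dist_eq, abs_sub_comm, abs_of_nonneg (by linarith)]
    have hcast : ((N : ℝ) + 1) ≤ (n : ℝ) + 1 := by
      have : (N : ℝ) ≤ (n : ℝ) := Nat.cast_le.mpr hn
      linarith
    have hmono : (1 : ℝ) / (n + 1) ≤ 1 / (N + 1) :=
      one_div_le_one_div_of_le (by positivity) hcast
    linarith
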